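/- An HJ continued fraction [e_1,...,e_r] with all e_i ≥ 2 admits a zero continued fraction of weight 0 if and only if it is the dual of a Wahl chain, i.e., it is the HJ expansion of n²/(n²-na+1) for some coprime 0 < a < n. -/

import Mathlib

/-- The value of a Hirzebruch–Jung continued fraction `[e₁,…,e_r]`,
computed as `e₁ - 1/[e₂,…,e_r]` with `[e_r] = e_r`. -/
def hjVal : List ℤ → ℚ
  | [] => 0
  | [x] => (x : ℚ)
  | x :: y :: xs => (x : ℚ) - (hjVal (y :: xs))⁻¹

/-- `IsHJ m q L` : `L` is the HJ continued fraction expansion of `m/q`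
(all entries at least 2 and value `m/q`). -/
def IsHJ (m q : ℤ) (L : List ℤ) : Prop :=
  (∀ e ∈ L, 2 ≤ e) ∧ hjVal L = (m : ℚ) / (q : ℚ)

/-- `IsWahlChain n a L` : `L` is the Wahl chain of `n²/(na-1)` for coprime `0 < a < n`. -/
def IsWahlChain (n a : ℤ) (L : List ℤ) : Prop :=
  0 < a ∧ a < n ∧ Int.gcd n a = 1 ∧ IsHJ (n ^ 2) (n * a - 1) L

/-- One blow-down move on a chain: `[…,u,1,v,…] ↦ […,u-1,v-1,…]`,
including the boundary cases `[1,v,…] ↦ [v-1,…]` and `[…,u,1] ↦ […,u-1]`. -/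
inductive BDStep : List ℤ → List ℤ → Prop
  | mid (l r : List ℤ) (u v : ℤ) :
      BDStep (l ++ u :: 1 :: v :: r) (l ++ (u - 1) :: (v - 1) :: r)
  | left (r : List ℤ) (v : ℤ) : BDStep (1 :: v :: r) ((v - 1) :: r)
  | right (l : List ℤ) (u : ℤ) : BDStep (l ++ [u, 1]) (l ++ [u - 1])

/-- A zero continued fraction: a chain that blows down to `[1,1]`. -/
def IsZCF (L : List ℤ) : Prop :=
  Relation.ReflTransGen BDStep L [1, 1]

/-- `AdmitsZCF L lam` : one can decrease some entries of `L` by positive integers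
with total sum `lam + 1` so that the result is a zero continued fraction. -/
def AdmitsZCF (L : List ℤ) (lam : ℤ) : Prop :=
  ∃ K : List ℤ, K.length = L.length ∧ (∀ i : ℕ, K.getD i 0 ≤ L.getD i 0) ∧
    L.sum - K.sum = lam + 1 ∧ IsZCF K

/-! ### Auxiliary machinery -/

section Aux

/-! #### Continuant matrices -/

abbrev Mat2 := Matrix (Fin 2) (Fin 2) ℤ

def hm (e : ℤ) : Mat2 := !![e, -1; 1, 0]

def mats : List ℤ → Mat2
  | [] => 1
  | e :: T => hm e * mats T

lemma mats_cons (e : ℤ) (T : List ℤ) : mats (e :: T) = hm e * mats T := rfl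

lemma mats_append (A B : List ℤ) : mats (A ++ B) = mats A * mats B := by
  induction A with
  | nil => simp [mats]
  | cons a A ih => simp [mats, ih, mul_assoc]

lemma mats_det (L : List ℤ) : (mats L).det = 1 := by
  induction L with
  | nil => simp [mats]
  | cons e T ih =>
    show (hm e * mats T).det = 1
    rw [Matrix.det_mul, ih, mul_one]
    simp [hm, Matrix.det_fin_two_of]

lemma hm_mul (e : ℤ) (X : Mat2) :
    hm e * X = !![e * X 0 0 - X 1 0, e * X 0 1 - X 1 1; X 0 0, X 0 1] := by
  ext i j
  fin_cases i <;> fin_cases j <;>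
    simp [hm, Matrix.mul_apply, Fin.sum_univ_two] <;> ring

lemma mul_entries (X Y : Mat2) (i j : Fin 2) :
    (X * Y) i j = X i 0 * Y 0 j + X i 1 * Y 1 j := by
  rw [Matrix.mul_apply, Fin.sum_univ_two]

lemma mats_pos : ∀ L : List ℤ, L ≠ [] → (∀ e ∈ L, 2 ≤ e) →
    1 ≤ mats L 1 0 ∧ mats L 1 0 < mats L 0 0 ∧
      hjVal L = (mats L 0 0 : ℚ) / (mats L 1 0 : ℚ) := by
  intro L
  induction L with
  | nil => intro h; exact absurd rfl h
  | cons e T ih =>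
    intro _ hmem
    have he : 2 ≤ e := hmem e (by simp)
    cases T with
    | nil =>
      simp [mats, hm, hjVal]
      omega
    | cons y xs =>
      obtain ⟨h1, h2, h3⟩ := ih (by simp) (fun x hx => hmem x (by simp [hx]))
      set p := mats (y :: xs) 0 0 with hp
      set q := mats (y :: xs) 1 0 with hq
      have hmul : mats (e :: y :: xs) = hm e * mats (y :: xs) := rfl
      rw [hmul, hm_mul]
      have e00 : (!![e * p - q, e * mats (y::xs) 0 1 - mats (y::xs) 1 1;
          p, mats (y::xs) 0 1] : Mat2) 0 0 = e * p - q := by simp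
      have e10 : (!![e * p - q, e * mats (y::xs) 0 1 - mats (y::xs) 1 1;
          p, mats (y::xs) 0 1] : Mat2) 1 0 = p := by simp
      rw [e00, e10]
      refine ⟨by omega, by nlinarith, ?_⟩
      have hval : hjVal (e :: y :: xs) = (e : ℚ) - (hjVal (y :: xs))⁻¹ := rfl
      rw [hval, h3, inv_div]
      have hp0 : (p : ℚ) ≠ 0 := by exact_mod_cast (by omega : p ≠ 0)
      field_simp
      try push_cast
      try ring

/-! #### Values `> 1` and uniqueness of HJ expansions -/

lemma hj_gt_one : ∀ L : List ℤ, L ≠ [] → (∀ e ∈ L, 2 ≤ e) → 1 < hjVal L := by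
  intro L
  induction L with
  | nil => intro h; exact absurd rfl h
  | cons e T ih =>
    intro _ hmem
    have he : 2 ≤ e := hmem e (by simp)
    have he' : (2 : ℚ) ≤ (e : ℚ) := by exact_mod_cast he
    cases T with
    | nil => show (1:ℚ) < (e:ℚ); linarith
    | cons y xs =>
      have h1 : 1 < hjVal (y :: xs) := ih (by simp) (fun x hx => hmem x (by simp [hx]))
      have h2 : (hjVal (y :: xs))⁻¹ < 1 := by
        rw [inv_lt_one_iff₀]; right; exact h1
      have h3 : 0 < (hjVal (y :: xs))⁻¹ := by positivity
      show (1:ℚ) < (e:ℚ) - (hjVal (y :: xs))⁻¹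
      linarith

lemma hj_uniq : ∀ L L' : List ℤ, (∀ e ∈ L, 2 ≤ e) → (∀ e ∈ L', 2 ≤ e) →
    hjVal L = hjVal L' → L = L' := by
  intro L
  induction L with
  | nil =>
    intro L' _ h2 hv
    cases L' with
    | nil => rfl
    | cons e T =>
      exfalso
      have := hj_gt_one (e :: T) (by simp) h2
      rw [← hv] at this; simp [hjVal] at this; linarith
  | cons e T ih =>
    intro L' h1 h2 hv
    cases L' with
    | nil =>
      exfalso
      have := hj_gt_one (e :: T) (by simp) h1
      rw [hv] at this; simp [hjVal] at this; linarith
    | cons e' T' =>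
      have key : ∀ (x : ℤ) (S : List ℤ), (∀ a ∈ x :: S, 2 ≤ a) →
          hjVal (x :: S) = (x : ℚ) - (hjVal S)⁻¹ ∧
          0 ≤ (hjVal S)⁻¹ ∧ (hjVal S)⁻¹ < 1 := by
        intro x S hS
        cases S with
        | nil => simp [hjVal]
        | cons y ys =>
          have h1' : 1 < hjVal (y :: ys) :=
            hj_gt_one _ (by simp) (fun a ha => hS a (by simp [ha]))
          refine ⟨rfl, ?_, ?_⟩
          · positivity
          · rw [inv_lt_one_iff₀]; right; exact h1'
      obtain ⟨hv1, hnn1, hlt1⟩ := key e T h1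
      obtain ⟨hv2, hnn2, hlt2⟩ := key e' T' h2
      rw [hv1, hv2] at hv
      have hee : e = e' := by
        have : ((e - e' : ℤ) : ℚ) = (hjVal T)⁻¹ - (hjVal T')⁻¹ := by push_cast; linarith
        have hb : |((e - e' : ℤ) : ℚ)| < 1 := by
          rw [this, abs_lt]; constructor <;> linarith
        have habs : |e - e'| < 1 := by exact_mod_cast hb
        have := abs_lt.mp habs
        omega
      subst hee
      have hinv : (hjVal T)⁻¹ = (hjVal T')⁻¹ := by linarith
      cases T with
      | nil =>
        cases T' with
        | nil => rfl
        | cons y ys =>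
          exfalso
          have h1' : 1 < hjVal (y :: ys) :=
            hj_gt_one _ (by simp) (fun a ha => h2 a (by simp [ha]))
          have : (hjVal (y :: ys))⁻¹ > 0 := by positivity
          simp [hjVal] at hinv
          rw [← hinv] at this; simp at this
      | cons y ys =>
        cases T' with
        | nil =>
          exfalso
          have h1' : 1 < hjVal (y :: ys) :=
            hj_gt_one _ (by simp) (fun a ha => h1 a (by simp [ha]))
          have : (hjVal (y :: ys))⁻¹ > 0 := by positivity
          simp [hjVal] at hinv
          rw [hinv] at this; simp at this
        | cons y' ys' =>
          have : hjVal (y :: ys) = hjVal (y' :: ys') := inv_injective hinv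
          have := ih (y' :: ys') (fun a ha => h1 a (by simp [ha]))
            (fun a ha => h2 a (by simp [ha])) this
          rw [this]

/-! #### Basic facts about blow-downs -/

lemma bd_inv {S T : List ℤ} (h : BDStep S T) :
    (∃ l r u v, S = l ++ u :: 1 :: v :: r ∧ T = l ++ (u - 1) :: (v - 1) :: r) ∨
    (∃ r v, S = 1 :: v :: r ∧ T = (v - 1) :: r) ∨
    (∃ l u, S = l ++ [u, 1] ∧ T = l ++ [u - 1]) := by
  cases h with
  | mid l r u v => exact Or.inl ⟨l, r, u, v, rfl, rfl⟩
  | left r v => exact Or.inr (Or.inl ⟨r, v, rfl, rfl⟩)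
  | right l u => exact Or.inr (Or.inr ⟨l, u, rfl, rfl⟩)

lemma bd_one_mem {S T : List ℤ} (h : BDStep S T) : (1 : ℤ) ∈ S := by
  cases h <;> simp

lemma zcf_no_one {K : List ℤ} (h2 : ∀ e ∈ K, 2 ≤ e) : ¬ IsZCF K := by
  intro h
  rcases Relation.ReflTransGen.cases_head h with heq | ⟨c, hstep, _⟩
  · subst heq; have := h2 1 (by simp); omega
  · have := h2 1 (bd_one_mem hstep); omega

lemma zcf_not_one_cons : ∀ B : List ℤ, (∀ e ∈ B, 2 ≤ e) → ¬ IsZCF ((1 : ℤ) :: B) := by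
  intro B
  induction B with
  | nil =>
    intro _ h
    rcases Relation.ReflTransGen.cases_head h with heq | ⟨c, hstep, _⟩
    · simp at heq
    · rcases bd_inv hstep with ⟨l, r, u, v, heq, _⟩ | ⟨r, v, heq, _⟩ | ⟨l, u, heq, _⟩
      · have := congrArg List.length heq; simp at this; omega
      · simp at heq
      · have := congrArg List.length heq; simp at this
  | cons v B' ih =>
    intro hB h
    have hv : 2 ≤ v := hB v (by simp)
    rcases Relation.ReflTransGen.cases_head h with heq | ⟨c, hstep, hc⟩
    · have : v = 1 := by
        have := congrArg (fun L => L.getD 1 0) heq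
        simpa using this
      omega
    · rcases bd_inv hstep with ⟨l, r, u, w, heq, hT⟩ | ⟨r, w, heq, hT⟩ | ⟨l, u, heq, hT⟩
      · exfalso
        cases l with
        | nil =>
          simp at heq
          have := hB 1 (by rw [heq.2.1]; simp [heq.2.2])
          omega
        | cons x l' =>
          simp at heq
          have : (1:ℤ) ∈ v :: B' := by rw [heq.2]; simp
          have := hB 1 this
          omega
      · simp at heq
        obtain ⟨h1, h2⟩ := heq
        subst hT
        rw [← h1, ← h2] at hc
        by_cases hv2 : v = 2
        · subst hv2
          norm_num at hc
          exact ih (fun e he => hB e (by simp [he])) hc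
        · have h2all : ∀ e ∈ (v - 1) :: B', 2 ≤ e := by
            intro e he
            rcases List.mem_cons.mp he with h | h
            · omega
            · exact hB e (by simp [h])
          exact zcf_no_one h2all hc
      · exfalso
        cases l with
        | nil =>
          simp at heq
          have := hB 1 (by simp [heq.2])
          omega
        | cons x l' =>
          simp at heq
          have : (1:ℤ) ∈ v :: B' := by rw [heq.2]; simp
          have := hB 1 this
          omega

lemma bd_reverse {S T : List ℤ} (h : BDStep S T) : BDStep S.reverse T.reverse := by
  cases h with
  | mid l r u v =>
    have h1 : (l ++ u :: 1 :: v :: r).reverse = r.reverse ++ v :: 1 :: u :: l.reverse := by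
      simp
    have h2 : (l ++ (u - 1) :: (v - 1) :: r).reverse
        = r.reverse ++ (v - 1) :: (u - 1) :: l.reverse := by
      simp
    rw [h1, h2]
    exact BDStep.mid r.reverse l.reverse v u
  | left r v =>
    have h1 : ((1 : ℤ) :: v :: r).reverse = r.reverse ++ [v, 1] := by simp
    have h2 : ((v - 1) :: r).reverse = r.reverse ++ [v - 1] := by simp
    rw [h1, h2]
    exact BDStep.right r.reverse v
  | right l u =>
    have h1 : (l ++ [u, 1]).reverse = 1 :: u :: l.reverse := by simp
    have h2 : (l ++ [u - 1]).reverse = (u - 1) :: l.reverse := by simp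
    rw [h1, h2]
    exact BDStep.left l.reverse u

lemma zcf_reverse {K : List ℤ} (h : IsZCF K) : IsZCF K.reverse := by
  have := Relation.ReflTransGen.lift (fun L : List ℤ => L.reverse)
    (fun a b hab => bd_reverse hab) _ _ h
  simpa [Function.onFun, IsZCF] using this

lemma zcf_not_append_one : ∀ B : List ℤ, (∀ e ∈ B, 2 ≤ e) → ¬ IsZCF (B ++ [(1:ℤ)]) := by
  intro B hB h
  have := zcf_reverse h
  simp at this
  exact zcf_not_one_cons B.reverse (by intro e he; exact hB e (List.mem_reverse.mp he)) this

/-! #### The matrix of a zero continued fraction -/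

lemma hm_key (u v : ℤ) : hm u * hm 1 * hm v = hm (u - 1) * hm (v - 1) := by
  ext i j
  fin_cases i <;> fin_cases j <;>
    simp [hm, Matrix.mul_apply, Fin.sum_univ_two] <;> ring

lemma hm_left (v : ℤ) : hm 1 * hm v = !![1, 0; 1, 1] * hm (v - 1) := by
  ext i j
  fin_cases i <;> fin_cases j <;>
    simp [hm, Matrix.mul_apply, Fin.sum_univ_two] <;> ring

lemma hm_right (u : ℤ) : hm u * hm 1 = hm (u - 1) * !![1, -1; 0, 1] := by
  ext i j
  fin_cases i <;> fin_cases j <;>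
    simp [hm, Matrix.mul_apply, Fin.sum_univ_two] <;> ring

lemma zcf_matrix {K : List ℤ} (h : IsZCF K) :
    ∃ c : ℤ, mats K = !![0, -1; 1, -c] := by
  unfold IsZCF at h
  induction h using Relation.ReflTransGen.head_induction_on with
  | refl =>
    refine ⟨1, ?_⟩
    show mats [1, 1] = _
    simp only [mats, hm]
    ext i j
    fin_cases i <;> fin_cases j <;>
      simp [Matrix.mul_apply, Fin.sum_univ_two]
  | head hstep _ ih =>
    obtain ⟨c, hc⟩ := ih
    rename_i S T _
    cases hstep with
    | mid l r u v =>
      refine ⟨c, ?_⟩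
      rw [← hc]
      simp only [mats_append, mats_cons]
      rw [show hm u * (hm 1 * (hm v * mats r)) = (hm u * hm 1 * hm v) * mats r by
        simp [mul_assoc]]
      rw [hm_key]
      simp [mul_assoc]
    | left r v =>
      refine ⟨c + 1, ?_⟩
      have : mats (1 :: v :: r) = !![1, 0; 1, 1] * mats ((v - 1) :: r) := by
        simp only [mats_cons]
        rw [← mul_assoc, hm_left, mul_assoc]
      rw [this, hc]
      ext i j
      fin_cases i <;> fin_cases j <;>
        simp [Matrix.mul_apply, Fin.sum_univ_two] <;> try ring
    | right l u =>
      refine ⟨c + 1, ?_⟩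
      have : mats (l ++ [u, 1]) = mats (l ++ [u - 1]) * !![1, -1; 0, 1] := by
        simp only [mats_append, mats_cons, mats]
        rw [mul_one, mul_one, ← mul_assoc, mul_assoc (mats l), hm_right, ← mul_assoc, mul_assoc]
      rw [this, hc]
      ext i j
      fin_cases i <;> fin_cases j <;>
        simp [Matrix.mul_apply, Fin.sum_univ_two] <;> try ring

/-! #### Mid-only blow-downs and the `Shp` witness -/

/-- Mid-only blow-down step. -/
inductive BDm : List ℤ → List ℤ → Prop
  | mid (l r : List ℤ) (u v : ℤ) :
      BDm (l ++ u :: 1 :: v :: r) (l ++ (u - 1) :: (v - 1) :: r)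

def ZCFm (L : List ℤ) : Prop :=
  Relation.ReflTransGen BDm L [1, 1]

lemma zcfm_isZCF {K : List ℤ} (h : ZCFm K) : IsZCF K :=
  Relation.ReflTransGen.mono (fun _ _ hab => by cases hab with
    | mid l r u v => exact BDStep.mid l r u v) _ _ h

def incfirst : List ℤ → List ℤ
  | [] => []
  | x :: T => (x + 1) :: T

def inclast : List ℤ → List ℤ
  | [] => []
  | [x] => [x + 1]
  | x :: y :: t => x :: inclast (y :: t)

lemma inclast_append (X : List ℤ) {Y : List ℤ} (hY : Y ≠ []) :
    inclast (X ++ Y) = X ++ inclast Y := by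
  induction X with
  | nil => rfl
  | cons x X ih =>
    cases X with
    | nil =>
      cases Y with
      | nil => exact absurd rfl hY
      | cons y t => simp [inclast]
    | cons x' X' =>
      show inclast (x :: (x' :: X' ++ Y)) = _
      rw [show x :: (x' :: X' ++ Y) = x :: ((x' :: X') ++ Y) by simp,
        show ((x' :: X') ++ Y : List ℤ) = x' :: (X' ++ Y) by simp]
      rw [inclast]
      · rw [show (x' : ℤ) :: (X' ++ Y) = (x' :: X') ++ Y by simp, ih]
        simp

lemma liftU1 {K : List ℤ} (h : ZCFm K) : ZCFm (incfirst K ++ [2]) := by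
  unfold ZCFm at h ⊢
  induction h using Relation.ReflTransGen.head_induction_on with
  | refl =>
    have h1 : incfirst [1, 1] ++ [(2:ℤ)] = [] ++ (2:ℤ) :: 1 :: 2 :: [] := by
      simp [incfirst]
    have : BDm (incfirst [1, 1] ++ [(2:ℤ)]) ([1, 1]) := by
      rw [h1]
      have := BDm.mid ([] : List ℤ) ([] : List ℤ) 2 2
      simpa using this
    exact Relation.ReflTransGen.head this Relation.ReflTransGen.refl
  | head hstep _ ih =>
    rename_i S T _
    refine Relation.ReflTransGen.head ?_ ih
    cases hstep with
    | mid l r u v =>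
      cases l with
      | nil =>
        have h1 : incfirst ([] ++ u :: 1 :: v :: r) ++ [(2:ℤ)] =
            [] ++ (u + 1) :: 1 :: v :: (r ++ [2]) := by simp [incfirst]
        have h2 : incfirst ([] ++ (u - 1) :: (v - 1) :: r) ++ [(2:ℤ)] =
            [] ++ (u + 1 - 1) :: (v - 1) :: (r ++ [2]) := by
          simp [incfirst]; try ring_nf
        rw [h1, h2]
        exact BDm.mid [] (r ++ [2]) (u + 1) v
      | cons x l' =>
        have h1 : incfirst ((x :: l') ++ u :: 1 :: v :: r) ++ [(2:ℤ)] =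
            ((x + 1) :: l') ++ u :: 1 :: v :: (r ++ [2]) := by simp [incfirst]
        have h2 : incfirst ((x :: l') ++ (u - 1) :: (v - 1) :: r) ++ [(2:ℤ)] =
            ((x + 1) :: l') ++ (u - 1) :: (v - 1) :: (r ++ [2]) := by simp [incfirst]
        rw [h1, h2]
        exact BDm.mid ((x + 1) :: l') (r ++ [2]) u v

lemma liftU2 {K : List ℤ} (h : ZCFm K) : ZCFm (2 :: inclast K) := by
  unfold ZCFm at h ⊢
  induction h using Relation.ReflTransGen.head_induction_on with
  | refl =>
    have h1 : (2:ℤ) :: inclast [1, 1] = [] ++ (2:ℤ) :: 1 :: 2 :: [] := by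
      simp [inclast]
    have : BDm ((2:ℤ) :: inclast [1, 1]) ([1, 1]) := by
      rw [h1]
      have := BDm.mid ([] : List ℤ) ([] : List ℤ) 2 2
      simpa using this
    exact Relation.ReflTransGen.head this Relation.ReflTransGen.refl
  | head hstep _ ih =>
    rename_i S T _
    refine Relation.ReflTransGen.head ?_ ih
    cases hstep with
    | mid l r u v =>
      cases r with
      | nil =>
        have h1 : (2:ℤ) :: inclast (l ++ u :: 1 :: v :: []) =
            (2 :: l) ++ u :: 1 :: (v + 1) :: [] := by
          rw [inclast_append l (by simp)]
          simp [inclast]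
        have h2 : (2:ℤ) :: inclast (l ++ (u - 1) :: (v - 1) :: []) =
            (2 :: l) ++ (u - 1) :: (v + 1 - 1) :: [] := by
          rw [inclast_append l (by simp)]
          simp [inclast]
          try ring_nf
        rw [h1, h2]
        exact BDm.mid (2 :: l) [] u (v + 1)
      | cons y r' =>
        have h1 : (2:ℤ) :: inclast (l ++ u :: 1 :: v :: y :: r') =
            (2 :: l) ++ u :: 1 :: v :: inclast (y :: r') := by
          rw [inclast_append l (by simp)]
          simp [inclast]
        have h2 : (2:ℤ) :: inclast (l ++ (u - 1) :: (v - 1) :: y :: r') =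
            (2 :: l) ++ (u - 1) :: (v - 1) :: inclast (y :: r') := by
          rw [inclast_append l (by simp)]
          simp [inclast]
        rw [h1, h2]
        exact BDm.mid (2 :: l) (inclast (y :: r')) u v

/-- Witness shape for `AdmitsZCF _ 0`. -/
def Shp (L : List ℤ) : Prop :=
  ∃ A B : List ℤ, ∃ u : ℤ, L = A ++ (u + 1) :: B ∧ ZCFm (A ++ u :: B)

lemma shp_U1 {L : List ℤ} (h : Shp L) : Shp (incfirst L ++ [2]) := by
  obtain ⟨A, B, u, hL, hz⟩ := h
  cases A with
  | nil =>
    refine ⟨[], B ++ [2], u + 1, ?_, ?_⟩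
    · simp [hL, incfirst]; try ring_nf
    · have := liftU1 hz
      simpa [incfirst] using this
  | cons x A' =>
    refine ⟨(x + 1) :: A', B ++ [2], u, ?_, ?_⟩
    · simp [hL, incfirst]
    · have := liftU1 hz
      simpa [incfirst] using this

lemma shp_U2 {L : List ℤ} (h : Shp L) : Shp (2 :: inclast L) := by
  obtain ⟨A, B, u, hL, hz⟩ := h
  cases B with
  | nil =>
    refine ⟨2 :: A, [], u + 1, ?_, ?_⟩
    · rw [hL, inclast_append A (by simp)]
      simp [inclast]
      try ring_nf
    · have := liftU2 hz
      rw [inclast_append A (by simp)] at this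
      simpa [inclast] using this
  | cons b B' =>
    refine ⟨2 :: A, inclast (b :: B'), u, ?_, ?_⟩
    · rw [hL, inclast_append A (by simp)]
      simp [inclast]
    · have := liftU2 hz
      rw [inclast_append A (by simp)] at this
      simpa [inclast] using this

lemma shp_base : Shp [2, 2, 2] := by
  refine ⟨[2], [2], 1, by norm_num, ?_⟩
  have : BDm ([2, 1, 2] : List ℤ) [1, 1] := by
    have := BDm.mid ([] : List ℤ) ([] : List ℤ) 2 2
    simpa using this
  have h2 : ([2] ++ (1:ℤ) :: [2] : List ℤ) = [2, 1, 2] := by simp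
  rw [h2]
  exact Relation.ReflTransGen.head this Relation.ReflTransGen.refl

/-! #### Construction of duals of Wahl chains -/

def Umat : Mat2 := !![1, 1; 0, 1]
def Vmat : Mat2 := !![1, 0; -1, 1]

lemma hm_succ_left (e : ℤ) : hm (e + 1) = Umat * hm e := by
  ext i j
  fin_cases i <;> fin_cases j <;>
    simp [hm, Umat, Matrix.mul_apply, Fin.sum_univ_two]

lemma hm_succ_right (e : ℤ) : hm (e + 1) = hm e * Vmat := by
  ext i j
  fin_cases i <;> fin_cases j <;>
    simp [hm, Vmat, Matrix.mul_apply, Fin.sum_univ_two]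

lemma mats_incfirst {L : List ℤ} (h : L ≠ []) : mats (incfirst L) = Umat * mats L := by
  cases L with
  | nil => exact absurd rfl h
  | cons x T => simp [incfirst, mats_cons, hm_succ_left, mul_assoc]

lemma mats_inclast : ∀ {L : List ℤ}, L ≠ [] → mats (inclast L) = mats L * Vmat := by
  intro L
  induction L with
  | nil => intro h; exact absurd rfl h
  | cons x T ih =>
    intro _
    cases T with
    | nil =>
      show mats [x + 1] = mats [x] * Vmat
      simp [mats, hm_succ_right, mul_assoc]
    | cons y t =>
      show mats (x :: inclast (y :: t)) = mats (x :: y :: t) * Vmat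
      rw [mats_cons, ih (by simp), mats_cons, ← mul_assoc, ← mul_assoc, mats_cons, mats_cons]
      noncomm_ring

/-- The target matrix for the dual Wahl chain of parameters `(n, a')`. -/
def Mform (n a' : ℤ) : Mat2 :=
  !![n ^ 2, -(n * (n - a') + 1); n * a' + 1, -((n - a') * a' + 1)]

lemma step1_mat (n a' : ℤ) :
    Umat * Mform (n - a') a' * hm 2 = Mform n a' := by
  ext i j
  fin_cases i <;> fin_cases j <;>
    simp [Umat, Mform, hm, Matrix.mul_apply, Fin.sum_univ_two] <;> ring

lemma step2_mat (n a' : ℤ) :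
    hm 2 * Mform a' (2 * a' - n) * Vmat = Mform n a' := by
  ext i j
  fin_cases i <;> fin_cases j <;>
    simp [Vmat, Mform, hm, Matrix.mul_apply, Fin.sum_univ_two] <;> ring

lemma mats_base : mats [2, 2, 2] = Mform 2 1 := by
  show hm 2 * (hm 2 * (hm 2 * 1)) = _
  ext i j
  fin_cases i <;> fin_cases j <;>
    simp [Mform, hm, Matrix.mul_apply, Fin.sum_univ_two]

lemma incfirst_entries {L : List ℤ} (h : ∀ e ∈ L, 2 ≤ e) :
    ∀ e ∈ incfirst L, 2 ≤ e := by
  cases L with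
  | nil => simp [incfirst]
  | cons x T =>
    intro e he
    rcases List.mem_cons.mp he with h1 | h1
    · have := h x (by simp); omega
    · exact h e (by simp [h1])

lemma inclast_entries : ∀ L : List ℤ, (∀ e ∈ L, 2 ≤ e) → ∀ e ∈ inclast L, 2 ≤ e := by
  intro L
  induction L with
  | nil => simp [inclast]
  | cons x T ih =>
    intro h e he
    cases T with
    | nil =>
      simp [inclast] at he
      have := h x (by simp)
      omega
    | cons y t =>
      rcases List.mem_cons.mp he with h1 | h1
      · exact h e (by simp [h1])
      · exact ih (fun a ha => h a (by simp [ha])) e h1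

lemma buildD : ∀ N : ℕ, ∀ n a' : ℤ, n ≤ (N : ℤ) → 0 < a' → a' < n → IsCoprime n a' →
    ∃ L : List ℤ, L ≠ [] ∧ (∀ e ∈ L, 2 ≤ e) ∧ mats L = Mform n a' ∧ Shp L := by
  intro N
  induction N with
  | zero => intro n a' h1 h2 h3 _; exfalso; omega
  | succ N ih =>
    intro n a' hn h2 h3 hcop
    by_cases hbase : n = 2
    · have ha1 : a' = 1 := by omega
      subst hbase ha1
      exact ⟨[2, 2, 2], by simp, by intro e he; simp at he; omega, mats_base, shp_base⟩
    · have hn3 : 3 ≤ n := by omega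
      have hne : 2 * a' ≠ n := by
        intro h
        have hdvd : a' ∣ n := ⟨2, by omega⟩
        have := hcop.symm.isUnit_of_dvd' dvd_rfl hdvd
        rcases Int.isUnit_iff.mp this with h1 | h1 <;> omega
      rcases lt_or_gt_of_ne hne with hlt | hgt
      · -- 2a' < n : predecessor (n - a', a')
        have hcop' : IsCoprime (n - a') a' := by
          obtain ⟨u, v, huv⟩ := hcop
          exact ⟨u, v + u, by linarith [huv]⟩
        obtain ⟨L0, hne0, h2e, hmat, hshp⟩ :=
          ih (n - a') a' (by omega) h2 (by omega) hcop'
        refine ⟨incfirst L0 ++ [2], by simp, ?_, ?_, shp_U1 hshp⟩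
        · intro e he
          rcases List.mem_append.mp he with h1 | h1
          · exact incfirst_entries h2e e h1
          · simp at h1; omega
        · rw [mats_append, mats_incfirst hne0, hmat]
          rw [show mats [(2:ℤ)] = hm 2 by simp [mats]]
          exact step1_mat n a'
      · -- 2a' > n : predecessor (a', 2a' - n)
        have hcop' : IsCoprime a' (2 * a' - n) := by
          obtain ⟨u, v, huv⟩ := hcop
          exact ⟨2 * u + v, -u, by linarith [huv]⟩
        obtain ⟨L0, hne0, h2e, hmat, hshp⟩ :=
          ih a' (2 * a' - n) (by omega) (by omega) (by omega) hcop'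
        refine ⟨2 :: inclast L0, by simp, ?_, ?_, shp_U2 hshp⟩
        · intro e he
          rcases List.mem_cons.mp he with h1 | h1
          · omega
          · exact inclast_entries L0 h2e e h1
        · rw [mats_cons, mats_inclast hne0, hmat, ← mul_assoc]
          exact step2_mat n a'

/-! #### List arithmetic lemmas -/

lemma sum_le_of_pointwise : ∀ K L : List ℤ, K.length = L.length →
    (∀ i : ℕ, K.getD i 0 ≤ L.getD i 0) → K.sum ≤ L.sum := by
  intro K
  induction K with
  | nil =>
    intro L hlen _
    cases L with
    | nil => simp
    | cons l L' => simp at hlen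
  | cons k K' ih =>
    intro L hlen hpt
    cases L with
    | nil => simp at hlen
    | cons l L' =>
      have h0 : k ≤ l := by have := hpt 0; simpa using this
      have htail := ih L' (by simpa using hlen) (fun i => by have := hpt (i + 1); simpa using this)
      simp only [List.sum_cons]
      linarith

lemma eq_of_pointwise_sum : ∀ K L : List ℤ, K.length = L.length →
    (∀ i : ℕ, K.getD i 0 ≤ L.getD i 0) → K.sum = L.sum → K = L := by
  intro K
  induction K with
  | nil =>
    intro L hlen _ _
    cases L with
    | nil => rfl
    | cons l L' => simp at hlen
  | cons k K' ih =>
    intro L hlen hpt hsum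
    cases L with
    | nil => simp at hlen
    | cons l L' =>
      have h0 : k ≤ l := by have := hpt 0; simpa using this
      have hpt' : ∀ i : ℕ, K'.getD i 0 ≤ L'.getD i 0 :=
        fun i => by have := hpt (i + 1); simpa using this
      have hlen' : K'.length = L'.length := by simpa using hlen
      have htail := sum_le_of_pointwise K' L' hlen' hpt'
      simp only [List.sum_cons] at hsum
      have hk : k = l := by linarith
      have : K' = L' := ih L' hlen' hpt' (by linarith)
      rw [hk, this]

lemma diff_decomp : ∀ K L : List ℤ, K.length = L.length →
    (∀ i : ℕ, K.getD i 0 ≤ L.getD i 0) → L.sum - K.sum = 1 →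
    ∃ A B : List ℤ, ∃ u : ℤ, K = A ++ u :: B ∧ L = A ++ (u + 1) :: B := by
  intro K
  induction K with
  | nil =>
    intro L hlen _ hsum
    cases L with
    | nil => simp at hsum
    | cons l L' => simp at hlen
  | cons k K' ih =>
    intro L hlen hpt hsum
    cases L with
    | nil => simp at hlen
    | cons l L' =>
      have h0 : k ≤ l := by have := hpt 0; simpa using this
      have hpt' : ∀ i : ℕ, K'.getD i 0 ≤ L'.getD i 0 :=
        fun i => by have := hpt (i + 1); simpa using this
      have hlen' : K'.length = L'.length := by simpa using hlen
      have htail := sum_le_of_pointwise K' L' hlen' hpt'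
      simp only [List.sum_cons] at hsum
      by_cases hk : k = l
      · subst hk
        obtain ⟨A, B, u, h1, h2⟩ := ih L' hlen' hpt' (by linarith)
        exact ⟨k :: A, B, u, by simp [h1], by simp [h2]⟩
      · have hl : l = k + 1 := by omega
        have : K' = L' := eq_of_pointwise_sum K' L' hlen' hpt' (by omega)
        exact ⟨[], K', k, by simp, by simp [hl, ← this]⟩

lemma getD_mono_at : ∀ (A : List ℤ) (u : ℤ) (B : List ℤ) (i : ℕ),
    (A ++ u :: B).getD i 0 ≤ (A ++ (u + 1) :: B).getD i 0 := by
  intro A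
  induction A with
  | nil =>
    intro u B i
    cases i with
    | zero => simp
    | succ j => simp
  | cons a A' ih =>
    intro u B i
    cases i with
    | zero => simp
    | succ j =>
      have := ih u B j
      simpa using this

lemma shp_admits {L : List ℤ} (h : Shp L) : AdmitsZCF L 0 := by
  obtain ⟨A, B, u, hL, hz⟩ := h
  refine ⟨A ++ u :: B, ?_, ?_, ?_, zcfm_isZCF hz⟩
  · rw [hL]; simp
  · intro i; rw [hL]; exact getD_mono_at A u B i
  · rw [hL]; simp [List.sum_append]

end Aux

/-- A chain with entries ≥ 2 admits a zero continued fraction of weight 0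
iff it is the dual of a Wahl chain, i.e. the expansion of `n²/(n²-na+1)`. -/
theorem stmt4 (L : List ℤ) (hL : ∀ e ∈ L, 2 ≤ e) :
    AdmitsZCF L 0 ↔
      ∃ n a : ℤ, 0 < a ∧ a < n ∧ Int.gcd n a = 1 ∧
        IsHJ (n ^ 2) (n ^ 2 - n * a + 1) L := by
  constructor
  · rintro ⟨K, hlen, hpt, hsum, hzcf⟩
    obtain ⟨A, B, u, hK, hLd⟩ := diff_decomp K L hlen hpt (by linarith)
    -- the modified entry must be a 1
    have hAL : ∀ e ∈ A, 2 ≤ e := fun e he => hL e (by rw [hLd]; simp [he])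
    have hBL : ∀ e ∈ B, 2 ≤ e := fun e he => hL e (by rw [hLd]; simp [he])
    have hu1 : 2 ≤ u + 1 := hL (u + 1) (by rw [hLd]; simp)
    have hone : (1 : ℤ) ∈ K := by
      rcases Relation.ReflTransGen.cases_head hzcf with heq | ⟨c, hstep, _⟩
      · rw [heq]; simp
      · exact bd_one_mem hstep
    have hu : u = 1 := by
      rw [hK] at hone
      rcases List.mem_append.mp hone with h1 | h1
      · have := hAL 1 h1; omega
      · rcases List.mem_cons.mp h1 with h2 | h2
        · omega
        · have := hBL 1 h2; omega
    subst hu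
    rw [hK] at hzcf
    -- A and B are nonempty
    have hAne : A ≠ [] := by
      intro h; subst h
      exact zcf_not_one_cons B hBL (by simpa using hzcf)
    have hBne : B ≠ [] := by
      intro h; subst h
      exact zcf_not_append_one A hAL (by simpa using hzcf)
    -- matrix analysis
    obtain ⟨c, hc⟩ := zcf_matrix hzcf
    have hKm : mats (A ++ (1:ℤ) :: B) = mats A * (hm 1 * mats B) := by
      rw [mats_append, mats_cons]
    obtain ⟨hA1, hA2, hA3⟩ := mats_pos A hAne hAL
    obtain ⟨hB1, hB2, hB3⟩ := mats_pos B hBne hBL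
    have hKm : mats (A ++ (1:ℤ) :: B) = mats A * (hm 1 * mats B) := by
      rw [mats_append, mats_cons]
    have hdetA : mats A 0 0 * mats A 1 1 - mats A 0 1 * mats A 1 0 = 1 := by
      have := mats_det A
      rwa [Matrix.det_fin_two] at this
    have hdetB : mats B 0 0 * mats B 1 1 - mats B 0 1 * mats B 1 0 = 1 := by
      have := mats_det B
      rwa [Matrix.det_fin_two] at this
    have hmB : hm 1 * mats B =
        !![mats B 0 0 - mats B 1 0, mats B 0 1 - mats B 1 1; mats B 0 0, mats B 0 1] := by
      rw [hm_mul]; norm_num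
    have h00 : mats A 0 0 * (mats B 0 0 - mats B 1 0) + mats A 0 1 * mats B 0 0 = 0 := by
      have := congrFun (congrFun (hKm ▸ hc) 0) 0
      rw [mul_entries] at this
      rw [hmB] at this
      simpa using this
    have h10 : mats A 1 0 * (mats B 0 0 - mats B 1 0) + mats A 1 1 * mats B 0 0 = 1 := by
      have := congrFun (congrFun (hKm ▸ hc) 1) 0
      rw [mul_entries] at this
      rw [hmB] at this
      simpa using this
    have hab : mats A 0 0 * mats B 1 0 = (mats A 0 0 + mats A 0 1) * mats B 0 0 := by
      nlinarith [h00]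
    have hcop_ab : IsCoprime (mats A 0 0) (mats A 0 0 + mats A 0 1) := by
      refine ⟨mats A 1 1 + mats A 1 0, -(mats A 1 0), ?_⟩
      linear_combination hdetA
    have hcop_b13 : IsCoprime (mats B 0 0) (mats B 1 0) := by
      refine ⟨mats B 1 1, -(mats B 0 1), ?_⟩
      linear_combination hdetB
    have hdvd1 : mats A 0 0 ∣ mats B 0 0 := by
      have h1 : mats A 0 0 ∣ mats B 0 0 * (mats A 0 0 + mats A 0 1) :=
        ⟨mats B 1 0, by linarith [hab]⟩
      exact hcop_ab.dvd_of_dvd_mul_right h1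
    have hdvd2 : mats B 0 0 ∣ mats A 0 0 := by
      have h1 : mats B 0 0 ∣ mats A 0 0 * mats B 1 0 :=
        ⟨mats A 0 0 + mats A 0 1, by linarith [hab]⟩
      exact hcop_b13.dvd_of_dvd_mul_right h1
    have hαb1 : mats A 0 0 = mats B 0 0 := Int.dvd_antisymm (by omega) (by omega) hdvd1 hdvd2
    have hb3 : mats B 1 0 = mats A 0 0 + mats A 0 1 := by
      have hα0 : mats A 0 0 ≠ 0 := by omega
      have h2 : mats A 0 0 * mats B 1 0 = mats A 0 0 * (mats A 0 0 + mats A 0 1) := by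
        rw [hab, ← hαb1]; ring
      have h3 := mul_left_cancel₀ hα0 h2
      linarith [h3]
    have hLm : mats L = mats A * (hm 2 * mats B) := by
      rw [hLd]
      show mats (A ++ (1 + 1 : ℤ) :: B) = _
      rw [mats_append, mats_cons]
      norm_num
    have hB00 : (hm 2 * mats B) 0 0 = 2 * mats B 0 0 - mats B 1 0 := by
      rw [hm_mul]; simp
    have hB10 : (hm 2 * mats B) 1 0 = mats B 0 0 := by
      rw [hm_mul]; simp
    have hL00 : mats L 0 0 = mats A 0 0 ^ 2 := by
      rw [hLm, mul_entries, hB00, hB10, hb3, ← hαb1]; ring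
    have hL10 : mats L 1 0 = mats A 1 0 * mats A 0 0 + 1 := by
      rw [hLm, mul_entries, hB00, hB10]
      have h2 : mats A 1 0 * (2 * mats B 0 0 - mats B 1 0) + mats A 1 1 * mats B 0 0
          = mats A 1 0 * mats B 0 0
            + (mats A 1 0 * (mats B 0 0 - mats B 1 0) + mats A 1 1 * mats B 0 0) := by ring
      rw [h2, h10, ← hαb1]
    refine ⟨mats A 0 0, mats A 0 0 - mats A 1 0, by omega, by omega, ?_, hL, ?_⟩
    · rw [← Int.isCoprime_iff_gcd_eq_one]
      have hcg : IsCoprime (mats A 0 0) (mats A 1 0) :=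
        ⟨mats A 1 1, -(mats A 0 1), by linear_combination hdetA⟩
      obtain ⟨x, y, hxy⟩ := hcg
      exact ⟨x + y, -y, by linear_combination hxy⟩
    · have hLne : L ≠ [] := by
        rw [hLd]; cases A <;> simp
      obtain ⟨_, _, hval⟩ := mats_pos L hLne hL
      rw [hval, hL00, hL10]
      have h2 : ((mats A 1 0 * mats A 0 0 + 1 : ℤ) : ℚ)
          = ((mats A 0 0 ^ 2 - mats A 0 0 * (mats A 0 0 - mats A 1 0) + 1 : ℤ) : ℚ) := by
        push_cast; ring
      rw [h2]
  · rintro ⟨n, a, ha0, han, hgcd, hent, hval⟩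
    have hcop : IsCoprime n a := Int.isCoprime_iff_gcd_eq_one.mpr hgcd
    have hcop' : IsCoprime n (n - a) := by
      obtain ⟨u, v, huv⟩ := hcop
      exact ⟨u + v, -v, by ring_nf; linarith [huv]⟩
    obtain ⟨L0, hne0, h2e, hmat, hshp⟩ :=
      buildD n.toNat n (n - a) (Int.self_le_toNat n) (by omega) (by omega) hcop'
    obtain ⟨_, _, hval0⟩ := mats_pos L0 hne0 h2e
    have hv0 : hjVal L0 = ((n ^ 2 : ℤ) : ℚ) / ((n ^ 2 - n * a + 1 : ℤ) : ℚ) := by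
      rw [hval0, hmat]
      have e00 : Mform n (n - a) 0 0 = n ^ 2 := by simp [Mform]
      have e10 : Mform n (n - a) 1 0 = n * (n - a) + 1 := by simp [Mform]
      rw [e00, e10]
      congr 1
      push_cast
      ring
    have : L = L0 := hj_uniq L L0 hent h2e (by rw [hval, hv0])
    rw [this]
    exact shp_admits hshp
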